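/- arXiv:1703.02760 — 2 statements merged into one kernel-verified Lean document; each statement's English description precedes it below -/
import Mathlib

section
/- Under the same ODE system with g concave, increasing, g(0)=0, g(x) ≤ g'(0)x with strict concavity, if a₁₂ g'(0) > a₁₁ a₂₂ and g is bounded, then there exists exactly one z₁* > 0 with a₁₂ g(z₁*) = a₁₁ a₂₂ z₁*, giving a unique nontrivial endemic equilibrium. -/
theorem stmt_4 (a11 a12 a22 : ℝ) (ha11 : 0 < a11) (ha12 : 0 < a12) (ha22 : 0 < a22)
    (g : ℝ → ℝ) (g'0 : ℝ)
    (hg0 : g 0 = 0)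
    (hgpos : ∀ x ≥ (0:ℝ), 0 ≤ g x)
    (hcont : ContinuousOn g (Set.Ici 0))
    (hconc : StrictConcaveOn ℝ (Set.Ioi 0) g)
    (hmono : MonotoneOn g (Set.Ici 0))
    (hderiv : HasDerivWithinAt g g'0 (Set.Ici 0) 0)
    (hg'pos : 0 < g'0)
    (hdom : ∀ x > (0:ℝ), g x < g'0 * x)
    (hbdd : ∃ B, ∀ x ≥ (0:ℝ), g x ≤ B)
    (hthr : a11 * a22 < a12 * g'0) :
    ∃! z₁ : ℝ, 0 < z₁ ∧ a12 * g z₁ = a11 * a22 * z₁ := by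
  set c := a11 * a22 / a12 with hc
  have ha12' : a12 ≠ 0 := ne_of_gt ha12
  have hcpos : 0 < c := by positivity
  have hcg : c < g'0 := by
    rw [hc, div_lt_iff₀ ha12]; nlinarith
  -- key: arbitrarily small ε with c*ε < g ε
  have hkey : ∀ δ > (0:ℝ), ∃ ε, 0 < ε ∧ ε < δ ∧ c * ε < g ε := by
    intro δ hδ
    have h1 : Set.Ici (0:ℝ) \ {0} = Set.Ioi 0 := by
      ext x
      simp only [Set.mem_diff, Set.mem_Ici, Set.mem_singleton_iff, Set.mem_Ioi]
      constructor
      · rintro ⟨h, h2⟩; exact lt_of_le_of_ne h (Ne.symm h2)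
      · intro h; exact ⟨le_of_lt h, ne_of_gt h⟩
    have htend := hasDerivWithinAt_iff_tendsto_slope.mp hderiv
    rw [h1] at htend
    have hset : {x : ℝ | c < slope g 0 x} ∈ nhdsWithin (0:ℝ) (Set.Ioi 0) :=
      htend (Ioi_mem_nhds hcg)
    have hset2 : Set.Ioo (0:ℝ) δ ∈ nhdsWithin (0:ℝ) (Set.Ioi 0) :=
      Ioo_mem_nhdsGT_of_mem ⟨le_refl 0, hδ⟩
    obtain ⟨ε, hε1, hε2⟩ := Filter.nonempty_of_mem (Filter.inter_mem hset hset2)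
    refine ⟨ε, hε2.1, hε2.2, ?_⟩
    have hslope : slope g 0 ε = g ε / ε := by
      simp [slope, hg0, div_eq_inv_mul]
    rw [Set.mem_setOf_eq, hslope] at hε1
    have := (lt_div_iff₀ hε2.1).mp hε1
    linarith [this]
  -- g x = c x iff a12 * g x = a11*a22*x
  have heqc : ∀ x : ℝ, a12 * g x = a11 * a22 * x → g x = c * x := by
    intro x h
    rw [hc]
    field_simp
    linarith
  -- uniqueness helper
  have huniq : ∀ x y : ℝ, 0 < x → 0 < y → a12 * g x = a11 * a22 * x →
      a12 * g y = a11 * a22 * y → x < y → False := by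
    intro x y hx hy hgx hgy hxy
    obtain ⟨ε, hε0, hεx, hεg⟩ := hkey x hx
    have hgx' := heqc x hgx
    have hgy' := heqc y hgy
    set A := (y - x) / (y - ε) with hA
    set B := (x - ε) / (y - ε) with hB
    have hyε : 0 < y - ε := by linarith
    have hApos : 0 < A := div_pos (by linarith) hyε
    have hBpos : 0 < B := div_pos (by linarith) hyε
    have hAB : A + B = 1 := by rw [hA, hB]; field_simp; ring
    have hcomb : A • ε + B • y = x := by
      rw [hA, hB, smul_eq_mul, smul_eq_mul]; field_simp; ring
    have hne : ε ≠ y := by linarith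
    have := hconc.2 (Set.mem_Ioi.mpr hε0) (Set.mem_Ioi.mpr hy) hne hApos hBpos hAB
    rw [hcomb] at this
    rw [smul_eq_mul, smul_eq_mul, hgy', hgx'] at this
    -- A * g ε + B * (c * y) < c * x, and x = A*ε + B*y
    have hx' : x = A * ε + B * y := by
      rw [← hcomb, smul_eq_mul, smul_eq_mul]
    nlinarith [hεg, hApos]
  -- existence
  obtain ⟨B, hB⟩ := hbdd
  obtain ⟨ε, hε0, hε1, hεg⟩ := hkey 1 one_pos
  have hBpos : 0 < B := lt_of_lt_of_le (lt_of_le_of_lt (by positivity) hεg) (hB ε (le_of_lt hε0))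
  set M := max (ε + 1) (a12 * B / (a11 * a22) + 1) with hM
  have hεM : ε < M := lt_of_lt_of_le (by linarith) (le_max_left _ _)
  have hMbig : a12 * B / (a11 * a22) < M := lt_of_lt_of_le (by linarith) (le_max_right _ _)
  have hMpos : 0 < M := lt_trans hε0 hεM
  set h : ℝ → ℝ := fun x => a12 * g x - a11 * a22 * x with hh
  have hhcont : ContinuousOn h (Set.Icc ε M) := by
    apply ContinuousOn.sub
    · exact ContinuousOn.mul continuousOn_const
        (hcont.mono (fun x hx => le_trans (le_of_lt hε0) hx.1))
    · exact (continuous_const.mul continuous_id).continuousOn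
  have hhε : 0 < h ε := by
    have : a11 * a22 = a12 * c := by rw [hc]; field_simp
    simp only [hh]
    nlinarith
  have hhM : h M < 0 := by
    have h1 : g M ≤ B := hB M (le_of_lt hMpos)
    have h2 : a12 * B < a11 * a22 * M := by
      rw [div_lt_iff₀ (by positivity)] at hMbig
      linarith [hMbig]
    simp only [hh]
    nlinarith
  have := intermediate_value_Icc' (le_of_lt hεM) hhcont
  have hmem : (0:ℝ) ∈ Set.Icc (h M) (h ε) := ⟨le_of_lt hhM, le_of_lt hhε⟩
  obtain ⟨z, hz, hz0⟩ := this hmem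
  refine ⟨z, ⟨lt_of_lt_of_le hε0 hz.1, by simpa [hh, sub_eq_zero] using hz0⟩, ?_⟩
  intro w hw
  have hzsol : a12 * g z = a11 * a22 * z := by simpa [hh, sub_eq_zero] using hz0
  have hzpos : 0 < z := lt_of_lt_of_le hε0 hz.1
  rcases lt_trichotomy w z with hlt | heq | hgt
  · exact absurd (huniq w z hw.1 hzpos hw.2 hzsol hlt) (fun f => f.elim)
  · exact heq
  · exact absurd (huniq z w hzpos hw.1 hzsol hw.2 hgt) (fun f => f.elim)
end

section
/- In the simplified Ross–Macdonald ODE system X' = -rX + (ab/H)(H - X)Y, Y' = -μY + (ac/H)X(M - Y) with all parameters positive, define R₀² = (a²bcM)/(r μ H). If R₀ ≤ 1 then (0,0) is the only equilibrium in [0,H] × [0,M]; if R₀ > 1 then there exists a unique endemic equilibrium (X*, Y*) with 0 < X* < H and 0 < Y* < M. -/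
set_option maxHeartbeats 1000000

theorem stmt_18 (a b c r μ H M : ℝ)
    (ha : 0 < a) (hb : 0 < b) (hc : 0 < c) (hr : 0 < r) (hμ : 0 < μ)
    (hH : 0 < H) (hM : 0 < M)
    (R0 : ℝ) (hR0 : R0 = Real.sqrt (a ^ 2 * b * c * M / (r * μ * H))) :
    (R0 ≤ 1 → ∀ X Y : ℝ, 0 ≤ X → X ≤ H → 0 ≤ Y → Y ≤ M →
      r * X = (a * b / H) * (H - X) * Y → μ * Y = (a * c / H) * X * (M - Y) →
      X = 0 ∧ Y = 0) ∧
    (1 < R0 → ∃! p : ℝ × ℝ,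
      (0 < p.1 ∧ p.1 < H ∧ 0 < p.2 ∧ p.2 < M) ∧
      r * p.1 = (a * b / H) * (H - p.1) * p.2 ∧
      μ * p.2 = (a * c / H) * p.1 * (M - p.2)) := by
  have hKsq : R0 ^ 2 = a ^ 2 * b * c * M / (r * μ * H) := by
    rw [hR0, Real.sq_sqrt]; positivity
  have hR0nn : 0 ≤ R0 := by rw [hR0]; exact Real.sqrt_nonneg _
  constructor
  · intro h1 X Y hX0 hXH hY0 hYM e1 e2
    have hle : a ^ 2 * b * c * M ≤ r * μ * H := by
      have h2 : R0 ^ 2 ≤ 1 := by nlinarith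
      rw [hKsq, div_le_one (by positivity)] at h2
      linarith
    have e1' : r * X * H = a * b * (H - X) * Y := by
      field_simp at e1; linarith
    have e2' : μ * Y * H = a * c * X * (M - Y) := by
      field_simp at e2; linarith
    have hX : X = 0 := by
      by_contra hne
      have hXpos : 0 < X := lt_of_le_of_ne hX0 (Ne.symm hne)
      have hprod : (H - X) * Y = r * X * H / (a * b) := by
        field_simp; linarith
      have hprodpos : 0 < (H - X) * Y := by rw [hprod]; positivity
      have hYpos : 0 < Y := by
        rcases lt_or_ge 0 Y with h | h
        · exact h
        · exfalso; nlinarith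
      have hHX : 0 < H - X := by nlinarith
      have hMYp : (M - Y) = μ * Y * H / (a * c * X) := by
        field_simp; linarith
      have hMY : 0 < M - Y := by rw [hMYp]; positivity
      have key : r * μ * H ^ 2 * (X * Y) =
          a ^ 2 * b * c * ((H - X) * (M - Y)) * (X * Y) := by
        linear_combination (μ * Y * H) * e1' + (a * b * (H - X) * Y) * e2'
      have key2 : r * μ * H ^ 2 = a ^ 2 * b * c * ((H - X) * (M - Y)) :=
        mul_right_cancel₀ (ne_of_gt (mul_pos hXpos hYpos)) key
      have h3 : (H - X) * (M - Y) < H * M := by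
        nlinarith [mul_pos hXpos hM, mul_pos hYpos hHX]
      have h5 : a ^ 2 * b * c * ((H - X) * (M - Y)) < a ^ 2 * b * c * (H * M) :=
        mul_lt_mul_of_pos_left h3 (by positivity)
      have h6 : a ^ 2 * b * c * M * H ≤ r * μ * H * H :=
        mul_le_mul_of_nonneg_right hle hH.le
      linarith [key2]
    refine ⟨hX, ?_⟩
    subst hX
    have h4 : a * b * H * Y = 0 := by linarith [e1']
    have hab : a * b * H ≠ 0 := by positivity
    rcases mul_eq_zero.mp h4 with h | h
    · exact absurd h hab
    · exact h
  · intro h1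
    have hlt : r * μ * H < a ^ 2 * b * c * M := by
      have h2 : 1 < R0 ^ 2 := by nlinarith
      rw [hKsq, lt_div_iff₀ (by positivity)] at h2
      linarith
    have hDpos : 0 < r * a * c * H + a ^ 2 * b * c * M := by positivity
    obtain ⟨X₀, hX₀⟩ : ∃ x : ℝ, x = H * (a ^ 2 * b * c * M - r * μ * H) /
        (r * a * c * H + a ^ 2 * b * c * M) := ⟨_, rfl⟩
    have hlin : X₀ * (r * a * c * H + a ^ 2 * b * c * M) =
        H * (a ^ 2 * b * c * M - r * μ * H) := by
      rw [hX₀, div_mul_cancel₀ _ (ne_of_gt hDpos)]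
    have hX₀pos : 0 < X₀ := by
      rw [hX₀]; apply div_pos _ hDpos; nlinarith
    have hX₀H : X₀ < H := by
      have hsub : H * (r * a * c * H + a ^ 2 * b * c * M) -
          X₀ * (r * a * c * H + a ^ 2 * b * c * M) =
          H ^ 2 * (r * a * c) + H ^ 2 * (r * μ) := by
        linear_combination -hlin
      have hpos : (0:ℝ) < H ^ 2 * (r * a * c) + H ^ 2 * (r * μ) := by positivity
      have hXD : X₀ * (r * a * c * H + a ^ 2 * b * c * M) <
          H * (r * a * c * H + a ^ 2 * b * c * M) := by linarith
      exact lt_of_mul_lt_mul_right hXD hDpos.le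
    have hEpos : 0 < H * μ + a * c * X₀ :=
      add_pos (mul_pos hH hμ) (mul_pos (mul_pos ha hc) hX₀pos)
    obtain ⟨Y₀, hY₀⟩ : ∃ y : ℝ, y = a * c * X₀ * M / (H * μ + a * c * X₀) := ⟨_, rfl⟩
    have hY₀lin : Y₀ * (H * μ + a * c * X₀) = a * c * X₀ * M := by
      rw [hY₀, div_mul_cancel₀ _ (ne_of_gt hEpos)]
    have hY₀pos : 0 < Y₀ := by
      rw [hY₀]; apply div_pos _ hEpos; positivity
    have hY₀M : Y₀ < M := by
      rw [hY₀, div_lt_iff₀ hEpos]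
      have key := mul_pos hM (mul_pos hH hμ)
      linarith only [key]
    have h2' : μ * Y₀ * H = a * c * X₀ * (M - Y₀) := by
      linear_combination hY₀lin
    have h1' : r * X₀ * H = a * b * (H - X₀) * Y₀ := by
      apply mul_right_cancel₀ (ne_of_gt hEpos)
      linear_combination (-(a * b * (H - X₀))) * hY₀lin + X₀ * hlin
    refine ⟨(X₀, Y₀), ⟨⟨hX₀pos, hX₀H, hY₀pos, hY₀M⟩, ?_, ?_⟩, ?_⟩
    · show r * X₀ = (a * b / H) * (H - X₀) * Y₀
      field_simp
      linear_combination h1'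
    · show μ * Y₀ = (a * c / H) * X₀ * (M - Y₀)
      field_simp
      linear_combination h2'
    · rintro ⟨X, Y⟩ ⟨⟨hXpos, hXH, hYpos, hYM⟩, e1, e2⟩
      simp only at e1 e2
      have e1' : r * X * H = a * b * (H - X) * Y := by
        field_simp at e1; linarith
      have e2' : μ * Y * H = a * c * X * (M - Y) := by
        field_simp at e2; linarith
      have hYlin : Y * (H * μ + a * c * X) = a * c * X * M := by
        linear_combination e2'
      have key : X * ((r * H) * (H * μ + a * c * X) - a ^ 2 * b * c * M * (H - X)) = 0 := by
        linear_combination (H * μ + a * c * X) * e1' + (a * b * (H - X)) * hYlin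
      have hfac : (r * H) * (H * μ + a * c * X) - a ^ 2 * b * c * M * (H - X) = 0 :=
        (mul_eq_zero.mp key).resolve_left (ne_of_gt hXpos)
      have hXD : X * (r * a * c * H + a ^ 2 * b * c * M) =
          X₀ * (r * a * c * H + a ^ 2 * b * c * M) := by
        rw [hlin]; linear_combination hfac
      have hXeq : X = X₀ := mul_right_cancel₀ (ne_of_gt hDpos) hXD
      have hYE : Y * (H * μ + a * c * X₀) = Y₀ * (H * μ + a * c * X₀) := by
        rw [hY₀lin, ← hXeq]; exact hYlin
      have hYeq : Y = Y₀ := mul_right_cancel₀ (ne_of_gt hEpos) hYE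
      simp only [Prod.mk.injEq]
      exact ⟨hXeq, hYeq⟩
end
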